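/- Let V be a commutative unital C*-algebra. The map α_V sending a projection p ∈ V to the set {λ ∈ Σ_V : λ(p) = 1} is a bijection from the set of projections of V onto the set of clopen subsets of the Gelfand spectrum Σ_V. Moreover, for all projections p, q of V: p ≤ q if and only if α_V(p) ⊆ α_V(q); α_V(pq) = α_V(p) ∩ α_V(q); α_V(p + q − pq) = α_V(p) ∪ α_V(q); and α_V(1 − p) = Σ_V \ α_V(p). -/

import Mathlib

noncomputable section

/-- A projection in a `*`-ring: a self-adjoint idempotent. -/
def IsProjection {M : Type*} [Mul M] [Star M] (p : M) : Prop :=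
  star p = p ∧ p * p = p

/-- The Gelfand spectrum of a commutative unital C*-algebra `V`: the space of characters
`λ : V → ℂ`. -/
abbrev GelfandSpec (V : Type*) [CommCStarAlgebra V] : Type _ := V →ₐ[ℂ] ℂ

/-- The weak-* topology on the Gelfand spectrum (pointwise convergence of characters). -/
instance gelfandSpecTopology (V : Type*) [CommCStarAlgebra V] :
    TopologicalSpace (GelfandSpec V) :=
  TopologicalSpace.induced (fun l : GelfandSpec V => (l : V → ℂ)) Pi.topologicalSpace

/-- The map `α_V` sending a projection `p ∈ V` to the subset
`{λ ∈ Σ_V : λ(p) = 1}` of the Gelfand spectrum. -/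
def alphaMap {V : Type*} [CommCStarAlgebra V] (p : V) : Set (GelfandSpec V) :=
  {l : GelfandSpec V | l p = 1}

namespace AlphaAux

open WeakDual WeakDual.CharacterSpace

variable {V : Type*} [CommCStarAlgebra V]

/-- The homeomorphism between the character space and the Gelfand spectrum. -/
def charHomeo (V : Type*) [CommCStarAlgebra V] :
    WeakDual.characterSpace ℂ V ≃ₜ GelfandSpec V where
  toEquiv := equivAlgHom
  continuous_toFun := by
    apply continuous_induced_rng.mpr
    exact continuous_pi fun v => (WeakDual.eval_continuous v).comp continuous_subtype_val
  continuous_invFun := by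
    apply Continuous.subtype_mk
    apply continuous_induced_rng.mpr
    exact continuous_pi fun v =>
      (continuous_apply v).comp continuous_induced_dom

@[simp] lemma charHomeo_apply_apply (φ : WeakDual.characterSpace ℂ V) (v : V) :
    charHomeo V φ v = φ v := rfl

@[simp] lemma charHomeo_symm_apply_apply (l : GelfandSpec V) (v : V) :
    ((charHomeo V).symm l : V → ℂ) v = l v := rfl

lemma eval_zero_or_one {p : V} (hp : IsProjection p) (l : GelfandSpec V) :
    l p = 0 ∨ l p = 1 := by
  have h : l p * l p = l p := by rw [← map_mul, hp.2]
  have h2 : l p * (l p - 1) = 0 := by rw [mul_sub, mul_one, h, sub_self]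
  rcases mul_eq_zero.mp h2 with h | h
  · exact Or.inl h
  · exact Or.inr (sub_eq_zero.mp h)

lemma eq_of_forall_char (x y : V)
    (h : ∀ l : GelfandSpec V, l x = l y) : x = y := by
  apply (gelfandStarTransform V).injective
  ext φ
  exact h (charHomeo V φ)

end AlphaAux

open AlphaAux WeakDual in
/-- **Statement 17.** For a commutative unital C*-algebra `V`, the map `α_V`,
`p ↦ {λ ∈ Σ_V : λ(p) = 1}`, is a bijection from the set of projections of `V` onto the set of
clopen subsets of the Gelfand spectrum `Σ_V`. Moreover, for projections `p, q`:
`p ≤ q` (i.e. `q p = p`) iff `α_V(p) ⊆ α_V(q)`; `α_V(pq) = α_V(p) ∩ α_V(q)`;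
`α_V(p + q - pq) = α_V(p) ∪ α_V(q)`; and `α_V(1 - p) = Σ_V \ α_V(p)`. -/
theorem alphaMap_bijection_clopen (V : Type*) [CommCStarAlgebra V] :
    -- α_V maps projections to clopen subsets
    (∀ p : V, IsProjection p → IsClopen (alphaMap p)) ∧
    -- injectivity on projections
    (∀ p q : V, IsProjection p → IsProjection q → alphaMap p = alphaMap q → p = q) ∧
    -- surjectivity onto the clopen subsets
    (∀ S : Set (GelfandSpec V), IsClopen S → ∃ p : V, IsProjection p ∧ alphaMap p = S) ∧
    -- order: p ≤ q iff α_V(p) ⊆ α_V(q)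
    (∀ p q : V, IsProjection p → IsProjection q → (q * p = p ↔ alphaMap p ⊆ alphaMap q)) ∧
    -- meets
    (∀ p q : V, IsProjection p → IsProjection q →
      alphaMap (p * q) = alphaMap p ∩ alphaMap q) ∧
    -- joins
    (∀ p q : V, IsProjection p → IsProjection q →
      alphaMap (p + q - p * q) = alphaMap p ∪ alphaMap q) ∧
    -- complements
    (∀ p : V, IsProjection p → alphaMap (1 - p) = (alphaMap p)ᶜ) := by
  classical
  have heval : ∀ v : V, Continuous fun l : GelfandSpec V => l v := fun v =>
    (continuous_apply v).comp continuous_induced_dom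
  refine ⟨?_, ?_, ?_, ?_, ?_, ?_, ?_⟩
  · -- clopen
    intro p hp
    constructor
    · -- closed: alphaMap p = eval⁻¹ {1}
      have : alphaMap p = (fun l : GelfandSpec V => l p) ⁻¹' {1} := rfl
      rw [this]
      exact isClosed_singleton.preimage (heval p)
    · -- open: complement is eval⁻¹ {0}
      have hcompl : (alphaMap p)ᶜ = (fun l : GelfandSpec V => l p) ⁻¹' {0} := by
        ext l
        simp only [alphaMap, Set.mem_compl_iff, Set.mem_setOf_eq, Set.mem_preimage,
          Set.mem_singleton_iff]
        rcases eval_zero_or_one hp l with h | h <;> simp [h]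
      rw [← compl_compl (alphaMap p), hcompl]
      exact (isClosed_singleton.preimage (heval p)).isOpen_compl
  · -- injectivity
    intro p q hp hq h
    apply eq_of_forall_char
    intro l
    have hpq : l p = 1 ↔ l q = 1 := by
      constructor
      · intro h1; have : l ∈ alphaMap p := h1; rw [h] at this; exact this
      · intro h1; have : l ∈ alphaMap q := h1; rw [← h] at this; exact this
    rcases eval_zero_or_one hp l with h1 | h1 <;> rcases eval_zero_or_one hq l with h2 | h2 <;>
      simp_all
  · -- surjectivity
    intro S hS
    set T : Set (characterSpace ℂ V) := (charHomeo V) ⁻¹' S with hT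
    have hTclopen : IsClopen T := hS.preimage (charHomeo V).continuous
    set f : C(characterSpace ℂ V, ℂ) :=
      ⟨fun φ => if φ ∈ T then 1 else 0, by
        have : Continuous (fun b : Bool => if b then (1 : ℂ) else 0) := by
          exact continuous_of_discreteTopology
        have hb : Continuous T.boolIndicator :=
          (continuous_boolIndicator_iff_isClopen T).mpr hTclopen
        have : (fun φ => if φ ∈ T then (1 : ℂ) else 0) =
            (fun b : Bool => if b then (1 : ℂ) else 0) ∘ T.boolIndicator := by
          ext φ; by_cases h : φ ∈ T <;> simp [Set.boolIndicator, h]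
        rw [this]
        exact continuous_of_discreteTopology.comp hb⟩ with hf
    refine ⟨(gelfandStarTransform V).symm f, ⟨?_, ?_⟩, ?_⟩
    · -- star
      rw [← map_star]
      congr 1
      ext φ
      simp only [hf, ContinuousMap.star_apply, ContinuousMap.coe_mk]
      by_cases h : φ ∈ T <;> simp [h]
    · -- idempotent
      rw [← map_mul]
      congr 1
      ext φ
      simp only [hf, ContinuousMap.mul_apply, ContinuousMap.coe_mk]
      by_cases h : φ ∈ T <;> simp [h]
    · -- alphaMap = S
      ext l
      have key : l ((gelfandStarTransform V).symm f) = f ((charHomeo V).symm l) := by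
        have := (gelfandStarTransform V).apply_symm_apply f
        calc l ((gelfandStarTransform V).symm f)
            = gelfandStarTransform V ((gelfandStarTransform V).symm f) ((charHomeo V).symm l) :=
              rfl
          _ = f ((charHomeo V).symm l) := by rw [this]
      simp only [alphaMap, Set.mem_setOf_eq, key]
      simp only [hf, ContinuousMap.coe_mk]
      by_cases h : (charHomeo V).symm l ∈ T
      · simp only [h, if_true]
        have : l ∈ S := by
          have := h
          rw [hT, Set.mem_preimage, (charHomeo V).apply_symm_apply] at this
          exact this
        simp [this]
      · simp only [h, if_false]
        have : l ∉ S := by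
          intro hl
          apply h
          rw [hT, Set.mem_preimage, (charHomeo V).apply_symm_apply]
          exact hl
        simp [this]
  · -- order
    intro p q hp hq
    constructor
    · intro h l hl
      have : l q * l p = l p := by rw [← map_mul, h]
      have hlp : l p = 1 := hl
      rw [hlp, mul_one] at this
      exact this
    · intro h
      apply eq_of_forall_char
      intro l
      rw [map_mul]
      rcases eval_zero_or_one hp l with h1 | h1
      · rw [h1, mul_zero]
      · have : l ∈ alphaMap q := h h1
        rw [h1, this, mul_one]
  · -- meets
    intro p q hp hq
    ext l
    simp only [alphaMap, Set.mem_setOf_eq, Set.mem_inter_iff, map_mul]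
    rcases eval_zero_or_one hp l with h1 | h1 <;> rcases eval_zero_or_one hq l with h2 | h2 <;>
      simp [h1, h2]
  · -- joins
    intro p q hp hq
    ext l
    simp only [alphaMap, Set.mem_setOf_eq, Set.mem_union, map_sub, map_add, map_mul]
    rcases eval_zero_or_one hp l with h1 | h1 <;> rcases eval_zero_or_one hq l with h2 | h2 <;>
      simp [h1, h2]
  · -- complements
    intro p hp
    ext l
    simp only [alphaMap, Set.mem_setOf_eq, Set.mem_compl_iff, map_sub, map_one]
    rcases eval_zero_or_one hp l with h1 | h1 <;> simp [h1]
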